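/- arXiv:1312.7548 — 2 statements merged into one kernel-verified Lean document; each statement's English description precedes it below -/
import Mathlib

section
/- For every positive integer n, the number (10n+1)(10n+7)·C(3n,n) divides 88179·C(15n,5n)·C(5n−1,n−1); equivalently, 88179·t_n ≡ 0 (mod 10n+7), where t_n = C(15n,5n)·C(5n−1,n−1)/((10n+1)·C(3n,n)). -/
open Finset

section Core

private lemma core_big (q r : ℕ) (hq : 60 < q) (h5 : ¬ 5 ∣ q) (hr : r < q) :
    (if q ≤ r + (2*r)%q then 1 else 0) + (if (10*r+1)%q = 0 then 1 else 0)
      + (if (10*r+7)%q = 0 then 1 else 0)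
    ≤ (if q ≤ (5*r)%q + (10*r)%q then 1 else 0)
      + (if q ≤ (r+q-1)%q + (4*r)%q then 1 else 0) := by
  have hq0 : 0 < q := by omega
  rcases Nat.eq_zero_or_pos r with rfl | hr1
  · have e1 : (10*0+1) % q = 1 := Nat.mod_eq_of_lt (by omega)
    have e7 : (10*0+7) % q = 7 := Nat.mod_eq_of_lt (by omega)
    have e0 : (0+q-1) % q = q - 1 := by
      rw [Nat.zero_add]; exact Nat.mod_eq_of_lt (by omega)
    rw [e1, e7, e0]
    simp only [Nat.mul_zero, Nat.zero_mod, Nat.zero_add, Nat.add_zero]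
    split_ifs <;> first | omega | simp_all
  have h5r : ∀ j, j ≤ 4 → 5 * r ≠ j * q := by
    intro j hj he
    have hdq : q ∣ r * 5 := ⟨j, by rw [Nat.mul_comm r 5, he, Nat.mul_comm j q]⟩
    have hco : Nat.Coprime q 5 :=
      Nat.Coprime.symm (((by norm_num : Nat.Prime 5).coprime_iff_not_dvd).mpr h5)
    exact absurd (Nat.le_of_dvd hr1 (hco.dvd_of_dvd_mul_right hdq)) (by omega)
  have h51 := h5r 1 (by norm_num); have h52 := h5r 2 (by norm_num)
  have h53 := h5r 3 (by norm_num); have h54 := h5r 4 (by norm_num)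
  have hc4 : (r+q-1)%q = r-1 := by
    have h : (r+q-1) % q = (r-1) % q := by
      conv_lhs => rw [show r+q-1 = (r-1) + 1*q by omega]
      rw [Nat.add_mul_mod_self_right]
    rw [h, Nat.mod_eq_of_lt (by omega)]
  have b2 : (2*r)%q < q := Nat.mod_lt _ hq0
  have b4 : (4*r)%q < q := Nat.mod_lt _ hq0
  have b5 : (5*r)%q < q := Nat.mod_lt _ hq0
  have b10 : (10*r)%q < q := Nat.mod_lt _ hq0
  have E : ∀ k : ℕ, (k*r)%q + q*(k*r/q) = k*r := fun k => Nat.mod_add_div _ _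
  have D2 : (2*r)%q = 2*r ∨ (2*r)%q + q*1 = 2*r := by
    have h := E 2
    have h' : 2*r/q < 2 := Nat.div_lt_of_lt_mul (show 2*r < q*2 by omega)
    generalize hg : 2*r/q = d at h h'
    have h0 : d = 0 ∨ d = 1 := by omega
    rcases h0 with h0|h0 <;> subst h0 <;> omega
  have D4 : (4*r)%q = 4*r ∨ (4*r)%q + q*1 = 4*r ∨ (4*r)%q + q*2 = 4*r ∨ (4*r)%q + q*3 = 4*r := by
    have h := E 4
    have h' : 4*r/q < 4 := Nat.div_lt_of_lt_mul (show 4*r < q*4 by omega)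
    generalize hg : 4*r/q = d at h h'
    have h0 : d = 0 ∨ d = 1 ∨ d = 2 ∨ d = 3 := by omega
    rcases h0 with h0|h0|h0|h0 <;> subst h0 <;> omega
  have D5 : (5*r)%q = 5*r ∨ (5*r)%q + q*1 = 5*r ∨ (5*r)%q + q*2 = 5*r ∨ (5*r)%q + q*3 = 5*r
      ∨ (5*r)%q + q*4 = 5*r := by
    have h := E 5
    have h' : 5*r/q < 5 := Nat.div_lt_of_lt_mul (show 5*r < q*5 by omega)
    generalize hg : 5*r/q = d at h h'
    have h0 : d = 0 ∨ d = 1 ∨ d = 2 ∨ d = 3 ∨ d = 4 := by omega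
    rcases h0 with h0|h0|h0|h0|h0 <;> subst h0 <;> omega
  have D10 : (10*r)%q = 10*r ∨ (10*r)%q + q*1 = 10*r ∨ (10*r)%q + q*2 = 10*r
      ∨ (10*r)%q + q*3 = 10*r ∨ (10*r)%q + q*4 = 10*r ∨ (10*r)%q + q*5 = 10*r
      ∨ (10*r)%q + q*6 = 10*r ∨ (10*r)%q + q*7 = 10*r ∨ (10*r)%q + q*8 = 10*r
      ∨ (10*r)%q + q*9 = 10*r := by
    have h := E 10
    have h' : 10*r/q < 10 := Nat.div_lt_of_lt_mul (show 10*r < q*10 by omega)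
    generalize hg : 10*r/q = d at h h'
    have h0 : d = 0 ∨ d = 1 ∨ d = 2 ∨ d = 3 ∨ d = 4 ∨ d = 5
        ∨ d = 6 ∨ d = 7 ∨ d = 8 ∨ d = 9 := by omega
    rcases h0 with h0|h0|h0|h0|h0|h0|h0|h0|h0|h0 <;> subst h0 <;> omega
  have hd1 : (10*r+1)%q = 0 ↔ (10*r)%q + 1 = q := by
    rw [Nat.add_mod, Nat.mod_eq_of_lt (show 1 < q by omega)]
    constructor
    · intro h
      rcases Nat.lt_or_ge ((10*r)%q + 1) q with h'|h'
      · rw [Nat.mod_eq_of_lt h'] at h; omega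
      · omega
    · intro h; rw [h, Nat.mod_self]
  have hd7 : (10*r+7)%q = 0 ↔ (10*r)%q + 7 = q := by
    rw [Nat.add_mod, Nat.mod_eq_of_lt (show 7 < q by omega)]
    constructor
    · intro h
      rcases Nat.lt_or_ge ((10*r)%q + 7) q with h'|h'
      · rw [Nat.mod_eq_of_lt h'] at h; omega
      · have h'' : (10*r)%q + 7 - q < q := by omega
        rw [show (10*r)%q + 7 = ((10*r)%q + 7 - q) + 1*q by omega,
          Nat.add_mul_mod_self_right, Nat.mod_eq_of_lt h''] at h
        omega
    · intro h; rw [h, Nat.mod_self]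
  rw [hc4]
  simp only [hd1, hd7]
  split_ifs <;> omega

private lemma core_small : ∀ q < 61, (2 ≤ q ∧ ¬ 5 ∣ q ∧ q ≠ 3 ∧ q ≠ 7 ∧ q ≠ 13 ∧ q ≠ 17 ∧ q ≠ 19) →
    ∀ r < q,
    (if q ≤ r + (2*r)%q then 1 else 0) + (if (10*r+1)%q = 0 then 1 else 0)
      + (if (10*r+7)%q = 0 then 1 else 0)
    ≤ (if q ≤ (5*r)%q + (10*r)%q then 1 else 0)
      + (if q ≤ (r+q-1)%q + (4*r)%q then 1 else 0) := by decide

private lemma core_exc : ∀ q < 20, (q = 3 ∨ q = 7 ∨ q = 13 ∨ q = 17 ∨ q = 19) → ∀ r < q,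
    (if q ≤ r + (2*r)%q then 1 else 0) + (if (10*r+1)%q = 0 then 1 else 0)
      + (if (10*r+7)%q = 0 then 1 else 0)
    ≤ (if q ≤ (5*r)%q + (10*r)%q then 1 else 0)
      + (if q ≤ (r+q-1)%q + (4*r)%q then 1 else 0) + 1 := by decide

private lemma level (q n : ℕ) (hq2 : 2 ≤ q) (hn : 0 < n) (h5 : ¬ 5 ∣ q)
    (h3 : q ≠ 3) (h7 : q ≠ 7) (h13 : q ≠ 13) (h17 : q ≠ 17) (h19 : q ≠ 19) :
    (if q ≤ n%q + (2*n)%q then 1 else 0) + (if q ∣ 10*n+1 then 1 else 0)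
      + (if q ∣ 10*n+7 then 1 else 0)
    ≤ (if q ≤ (5*n)%q + (10*n)%q then 1 else 0)
      + (if q ≤ (n-1)%q + (4*n)%q then 1 else 0) := by
  have hq0 : 0 < q := by omega
  have hmm : ∀ a : ℕ, a % q % q = a % q := fun a => Nat.mod_mod_of_dvd a dvd_rfl
  have hk : ∀ k : ℕ, (k*n)%q = (k*(n%q))%q := fun k => by
    conv_lhs => rw [Nat.mul_mod, ← hmm n, ← Nat.mul_mod]
  have ed1 : (q ∣ 10*n+1) ↔ ((10*(n%q)+1)%q = 0) := by
    rw [Nat.dvd_iff_mod_eq_zero]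
    conv_lhs => rw [Nat.add_mod, hk 10, ← Nat.add_mod]
  have ed7 : (q ∣ 10*n+7) ↔ ((10*(n%q)+7)%q = 0) := by
    rw [Nat.dvd_iff_mod_eq_zero]
    conv_lhs => rw [Nat.add_mod, hk 10, ← Nat.add_mod]
  have en1 : (n-1)%q = ((n%q)+q-1)%q := by
    conv_lhs => rw [← Nat.add_mod_right (n-1) q, show n-1+q = n + (q-1) by omega,
      Nat.add_mod, Nat.mod_eq_of_lt (show q-1 < q by omega)]
    rw [show n%q + (q-1) = n%q + q - 1 by omega]
  rw [hk 2, hk 4, hk 5, hk 10, en1]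
  simp only [ed1, ed7]
  rcases Nat.lt_or_ge q 61 with hq61 | hq61
  · exact core_small q hq61 ⟨hq2, h5, h3, h7, h13, h17, h19⟩ (n%q) (Nat.mod_lt n hq0)
  · exact core_big q (n%q) (by omega) h5 (Nat.mod_lt n hq0)

private lemma level_exc (q n : ℕ) (hn : 0 < n) (hq : q = 3 ∨ q = 7 ∨ q = 13 ∨ q = 17 ∨ q = 19) :
    (if q ≤ n%q + (2*n)%q then 1 else 0) + (if q ∣ 10*n+1 then 1 else 0)
      + (if q ∣ 10*n+7 then 1 else 0)
    ≤ (if q ≤ (5*n)%q + (10*n)%q then 1 else 0)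
      + (if q ≤ (n-1)%q + (4*n)%q then 1 else 0) + 1 := by
  have hq0 : 0 < q := by rcases hq with h|h|h|h|h <;> omega
  have hmm : ∀ a : ℕ, a % q % q = a % q := fun a => Nat.mod_mod_of_dvd a dvd_rfl
  have hk : ∀ k : ℕ, (k*n)%q = (k*(n%q))%q := fun k => by
    conv_lhs => rw [Nat.mul_mod, ← hmm n, ← Nat.mul_mod]
  have ed1 : (q ∣ 10*n+1) ↔ ((10*(n%q)+1)%q = 0) := by
    rw [Nat.dvd_iff_mod_eq_zero]
    conv_lhs => rw [Nat.add_mod, hk 10, ← Nat.add_mod]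
  have ed7 : (q ∣ 10*n+7) ↔ ((10*(n%q)+7)%q = 0) := by
    rw [Nat.dvd_iff_mod_eq_zero]
    conv_lhs => rw [Nat.add_mod, hk 10, ← Nat.add_mod]
  have en1 : (n-1)%q = ((n%q)+q-1)%q := by
    conv_lhs => rw [← Nat.add_mod_right (n-1) q, show n-1+q = n + (q-1) by omega,
      Nat.add_mod, Nat.mod_eq_of_lt (show q-1 < q by omega)]
    rw [show n%q + (q-1) = n%q + q - 1 by omega]
  rw [hk 2, hk 4, hk 5, hk 10, en1]
  simp only [ed1, ed7]
  exact core_exc q (by omega) hq (n%q) (Nat.mod_lt n hq0)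

end Core

section Val

private lemma fact_choose {p : ℕ} (hp : p.Prime) (m k b : ℕ) (hb : Nat.log p (m+k) < b) :
    ((m+k).choose k).factorization p
      = #{i ∈ Finset.Ico 1 b | p ^ i ≤ k % p ^ i + m % p ^ i} := by
  have hne : (m+k).choose k ≠ 0 := (Nat.choose_pos (Nat.le_add_left k m)).ne'
  have h := Nat.Prime.emultiplicity_choose' hp (b := b) hb
  have h2 := multiplicity_eq_of_emultiplicity_eq_some h
  rw [← Nat.multiplicity_eq_factorization hp hne, h2]

private lemma fact_dvd_card {p : ℕ} (hp : p.Prime) (x b : ℕ) (hx : x ≠ 0) (hxb : x ≤ p ^ b) :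
    x.factorization p = #{i ∈ Finset.Icc 1 b | p ^ i ∣ x} := by
  rw [Nat.factorization_eq_card_pow_dvd x hp, Nat.Ico_filter_pow_dvd_eq hp hx hxb]

private lemma pow_ne_prime (p i s : ℕ) (hp : p.Prime) (hs : s.Prime) (hi : 1 ≤ i)
    (h2 : 2 ≤ i ∨ p ≠ s) : p^i ≠ s := by
  intro h
  have hd : p ∣ s := h ▸ dvd_pow_self p (by omega : i ≠ 0)
  have hps : p = s := (Nat.prime_dvd_prime_iff_eq hp hs).mp hd
  subst hps
  have : i = 1 := Nat.pow_right_injective hp.two_le (show p^i = p^1 by rw [pow_one]; exact h)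
  omega

private lemma not_five_dvd_pow {p i : ℕ} (hp : p.Prime) (hp5 : p ≠ 5) : ¬ (5 ∣ p^i) := by
  intro h
  have h5 : (5:ℕ).Prime := by norm_num
  exact hp5 ((Nat.prime_dvd_prime_iff_eq h5 hp).mp (h5.dvd_of_dvd_pow h)).symm

end Val

theorem t_n_mod_10n_add_7 (n : ℕ) (hn : 0 < n) :
    (10 * n + 1) * (10 * n + 7) * Nat.choose (3 * n) n ∣
      88179 * (Nat.choose (15 * n) (5 * n) * Nat.choose (5 * n - 1) (n - 1)) := by
  have hC3 : Nat.choose (3*n) n ≠ 0 := (Nat.choose_pos (by omega)).ne'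
  have hC15 : Nat.choose (15*n) (5*n) ≠ 0 := (Nat.choose_pos (by omega)).ne'
  have hC4 : Nat.choose (5*n-1) (n-1) ≠ 0 := (Nat.choose_pos (by omega)).ne'
  have hA : (10*n+1) * (10*n+7) * Nat.choose (3*n) n ≠ 0 :=
    mul_ne_zero (mul_ne_zero (by omega) (by omega)) hC3
  have hB : (88179:ℕ) * (Nat.choose (15*n) (5*n) * Nat.choose (5*n-1) (n-1)) ≠ 0 :=
    mul_ne_zero (by norm_num) (mul_ne_zero hC15 hC4)
  rw [← Nat.factorization_le_iff_dvd hA hB, Finsupp.le_def]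
  intro p
  by_cases hp : p.Prime
  swap
  · simp [Nat.factorization_eq_zero_of_not_prime _ hp]
  rw [Nat.factorization_mul (mul_ne_zero (by omega : (10*n+1) ≠ 0) (by omega : (10*n+7) ≠ 0)) hC3,
      Nat.factorization_mul (by omega : (10*n+1) ≠ 0) (by omega : (10*n+7) ≠ 0),
      Nat.factorization_mul (by norm_num : (88179:ℕ) ≠ 0) (mul_ne_zero hC15 hC4),
      Nat.factorization_mul hC15 hC4]
  simp only [Finsupp.coe_add, Pi.add_apply]
  set b := 15*n+8 with hbdef
  have hblt : b < 2^b := Nat.lt_two_pow_self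
  have h2p : 2^b ≤ p^b := Nat.pow_le_pow_left hp.two_le b
  have hlog3 : Nat.log p (2*n+n) < b+1 := by have := Nat.log_le_self p (2*n+n); omega
  have hlog15 : Nat.log p (10*n+5*n) < b+1 := by have := Nat.log_le_self p (10*n+5*n); omega
  have hlog4 : Nat.log p (4*n+(n-1)) < b+1 := by have := Nat.log_le_self p (4*n+(n-1)); omega
  have hv3 : (Nat.choose (3*n) n).factorization p
      = #{i ∈ Finset.Icc 1 b | p ^ i ≤ n % p ^ i + (2*n) % p ^ i} := by
    have h := fact_choose hp (2*n) n (b+1) hlog3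
    rw [Finset.Ico_add_one_right_eq_Icc, show 2*n+n = 3*n by ring] at h
    exact h
  have hv15 : (Nat.choose (15*n) (5*n)).factorization p
      = #{i ∈ Finset.Icc 1 b | p ^ i ≤ (5*n) % p ^ i + (10*n) % p ^ i} := by
    have h := fact_choose hp (10*n) (5*n) (b+1) hlog15
    rw [Finset.Ico_add_one_right_eq_Icc, show 10*n+5*n = 15*n by ring] at h
    exact h
  have hv4 : (Nat.choose (5*n-1) (n-1)).factorization p
      = #{i ∈ Finset.Icc 1 b | p ^ i ≤ (n-1) % p ^ i + (4*n) % p ^ i} := by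
    have h := fact_choose hp (4*n) (n-1) (b+1) hlog4
    rw [Finset.Ico_add_one_right_eq_Icc, show 4*n+(n-1) = 5*n-1 by omega] at h
    exact h
  by_cases hp5 : p = 5
  · -- p = 5 : use the digit-shift argument
    subst hp5
    have hz1 : (Nat.factorization (10*n+1)) 5 = 0 :=
      Nat.factorization_eq_zero_of_not_dvd (by omega)
    have hz7 : (Nat.factorization (10*n+7)) 5 = 0 :=
      Nat.factorization_eq_zero_of_not_dvd (by omega)
    rw [hz1, hz7, hv3, hv15]
    have hcard : #{i ∈ Finset.Icc 1 b | 5 ^ i ≤ n % 5 ^ i + (2*n) % 5 ^ i}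
        ≤ #{i ∈ Finset.Icc 1 b | 5 ^ i ≤ (5*n) % 5 ^ i + (10*n) % 5 ^ i} := by
      apply Finset.card_le_card_of_injOn (fun i => i+1)
      · intro i hi
        simp only [Finset.mem_coe, Finset.mem_filter, Finset.mem_Icc] at hi ⊢
        obtain ⟨⟨hi1, hib⟩, hcar⟩ := hi
        have hm1 : n % 5^i ≤ n := Nat.mod_le _ _
        have hm2 : (2*n) % 5^i ≤ 2*n := Nat.mod_le _ _
        have h5b : (5:ℕ)^i < 5^b := by
          calc (5:ℕ)^i ≤ n % 5^i + (2*n) % 5^i := hcar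
            _ ≤ 3*n := by omega
            _ < 2^b := by omega
            _ ≤ 5^b := Nat.pow_le_pow_left (by norm_num) b
        have hib' : i < b := (Nat.pow_lt_pow_iff_right (by norm_num : 1 < 5)).mp h5b
        refine ⟨⟨by omega, by omega⟩, ?_⟩
        have hps : (5:ℕ)^(i+1) = 5*5^i := by rw [pow_succ, Nat.mul_comm]
        rw [hps, show 10*n = 5*(2*n) by ring, Nat.mul_mod_mul_left, Nat.mul_mod_mul_left]
        omega
      · intro x _ y _ h
        exact Nat.succ_injective h
    omega
  -- p ≠ 5
  have hpow1 : 10*n+1 ≤ p^b := by omega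
  have hpow7 : 10*n+7 ≤ p^b := by omega
  have hv1 : (Nat.factorization (10*n+1)) p = #{i ∈ Finset.Icc 1 b | p ^ i ∣ 10*n+1} :=
    fact_dvd_card hp _ b (by omega) hpow1
  have hv7 : (Nat.factorization (10*n+7)) p = #{i ∈ Finset.Icc 1 b | p ^ i ∣ 10*n+7} :=
    fact_dvd_card hp _ b (by omega) hpow7
  rw [hv1, hv7, hv3, hv15, hv4, Finset.card_filter, Finset.card_filter, Finset.card_filter,
    Finset.card_filter, Finset.card_filter]
  by_cases hps : p = 3 ∨ p = 7 ∨ p = 13 ∨ p = 17 ∨ p = 19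
  · -- exceptional primes : one level of slack, paid by 88179 = 3*7*13*17*19
    have hv88 : 0 < (Nat.factorization 88179) p := by
      apply Nat.Prime.factorization_pos_of_dvd hp (by norm_num)
      rcases hps with h|h|h|h|h <;> subst h <;> norm_num
    have hpt : ∀ i ∈ Finset.Icc 1 b,
        (if p^i ∣ 10*n+1 then 1 else 0) + (if p^i ∣ 10*n+7 then 1 else 0)
          + (if p ^ i ≤ n % p ^ i + (2*n) % p ^ i then 1 else 0)
        ≤ ((if p ^ i ≤ (5*n) % p ^ i + (10*n) % p ^ i then 1 else 0)
          + (if p ^ i ≤ (n-1) % p ^ i + (4*n) % p ^ i then 1 else 0))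
          + (if i = 1 then 1 else 0) := by
      intro i hi
      rw [Finset.mem_Icc] at hi
      by_cases hi1 : i = 1
      · subst hi1
        rw [if_pos rfl, pow_one]
        have h := level_exc p n hn hps
        omega
      · rw [if_neg hi1]
        have hq2 : 2 ≤ p^i := hp.two_le.trans (Nat.le_self_pow (by omega) p)
        have h5d : ¬ 5 ∣ p^i := not_five_dvd_pow hp hp5
        have h := level (p^i) n hq2 hn h5d
          (pow_ne_prime p i 3 hp (by norm_num) (by omega) (by omega))
          (pow_ne_prime p i 7 hp (by norm_num) (by omega) (by omega))
          (pow_ne_prime p i 13 hp (by norm_num) (by omega) (by omega))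
          (pow_ne_prime p i 17 hp (by norm_num) (by omega) (by omega))
          (pow_ne_prime p i 19 hp (by norm_num) (by omega) (by omega))
        omega
    have hsum := Finset.sum_le_sum hpt
    rw [Finset.sum_add_distrib, Finset.sum_add_distrib, Finset.sum_add_distrib,
      Finset.sum_add_distrib, Finset.sum_ite_eq' (Finset.Icc 1 b) 1 (fun _ => 1),
      if_pos (Finset.mem_Icc.mpr ⟨le_refl 1, by omega⟩)] at hsum
    omega
  · -- generic primes : no slack needed
    push_neg at hps
    obtain ⟨hp3, hp7, hp13, hp17, hp19⟩ := hps
    have hpt : ∀ i ∈ Finset.Icc 1 b,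
        (if p^i ∣ 10*n+1 then 1 else 0) + (if p^i ∣ 10*n+7 then 1 else 0)
          + (if p ^ i ≤ n % p ^ i + (2*n) % p ^ i then 1 else 0)
        ≤ (if p ^ i ≤ (5*n) % p ^ i + (10*n) % p ^ i then 1 else 0)
          + (if p ^ i ≤ (n-1) % p ^ i + (4*n) % p ^ i then 1 else 0) := by
      intro i hi
      rw [Finset.mem_Icc] at hi
      have hq2 : 2 ≤ p^i := hp.two_le.trans (Nat.le_self_pow (by omega) p)
      have h5d : ¬ 5 ∣ p^i := not_five_dvd_pow hp hp5
      have h := level (p^i) n hq2 hn h5d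
        (pow_ne_prime p i 3 hp (by norm_num) (by omega) (Or.inr hp3))
        (pow_ne_prime p i 7 hp (by norm_num) (by omega) (Or.inr hp7))
        (pow_ne_prime p i 13 hp (by norm_num) (by omega) (Or.inr hp13))
        (pow_ne_prime p i 17 hp (by norm_num) (by omega) (Or.inr hp17))
        (pow_ne_prime p i 19 hp (by norm_num) (by omega) (Or.inr hp19))
      omega
    have hsum := Finset.sum_le_sum hpt
    rw [Finset.sum_add_distrib, Finset.sum_add_distrib, Finset.sum_add_distrib] at hsum
    omega
end

section
/- For every positive integer n, the number (10n+1)(10n+9)·C(3n,n) divides 43263·C(15n,5n)·C(5n−1,n−1); equivalently, 43263·t_n ≡ 0 (mod 10n+9), where t_n = C(15n,5n)·C(5n−1,n−1)/((10n+1)·C(3n,n)). -/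
open Nat Finset

/-- floor-inequality `⌊10x⌋+⌊4x⌋+⌊3x⌋ ≤ ⌊15x⌋+⌊2x⌋` for `x = n/q`. -/
private lemma div5 {q : ℕ} (hq : 0 < q) (n : ℕ) :
    10 * n / q + 4 * n / q + 3 * n / q ≤ 15 * n / q + 2 * n / q := by
  have e : ∀ k c : ℕ, 0 < c → c * k = 60 → k * n / q = 60 * n / q / c := by
    intro k c hc hkc
    rw [Nat.div_div_eq_div_mul, Nat.mul_comm q c, ← Nat.mul_div_mul_left (k * n) q hc,
      ← Nat.mul_assoc, hkc]
  rw [e 10 6 (by norm_num) (by norm_num), e 4 15 (by norm_num) (by norm_num),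
    e 3 20 (by norm_num) (by norm_num), e 15 4 (by norm_num) (by norm_num),
    e 2 30 (by norm_num) (by norm_num)]
  omega

private lemma auxA {q r : ℕ} (hq2 : q % 2 = 1) (hq5 : q % 5 ≠ 0) (hq1 : 1 < q)
    (hr : r < q) (hdvd : q ∣ 10 * r + 1) :
    10 * r / q + 4 * r / q + 3 * r / q + 1 ≤ 15 * r / q + 2 * r / q := by
  obtain ⟨m, hm⟩ := hdvd
  have hq0 : 0 < q := by omega
  have hm10 : m < 10 := by
    by_contra h
    push_neg at h
    have : q * 10 ≤ q * m := Nat.mul_le_mul_left q h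
    omega
  interval_cases m
  · omega
  · -- q = 10r+1
    have h15 : 15 * r / q = 1 := Nat.div_eq_of_lt_le (by omega) (by omega)
    have h10 : 10 * r / q = 0 := Nat.div_eq_of_lt (by omega)
    have h4 : 4 * r / q = 0 := Nat.div_eq_of_lt (by omega)
    have h3 : 3 * r / q = 0 := Nat.div_eq_of_lt (by omega)
    have h2 : 2 * r / q = 0 := Nat.div_eq_of_lt (by omega)
    rw [h15, h10, h4, h3, h2]
  · omega
  · have h15 : 15 * r / q = 4 := Nat.div_eq_of_lt_le (by omega) (by omega)
    have h10 : 10 * r / q = 2 := Nat.div_eq_of_lt_le (by omega) (by omega)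
    have h4 : 4 * r / q = 1 := Nat.div_eq_of_lt_le (by omega) (by omega)
    have h3 : 3 * r / q = 0 := Nat.div_eq_of_lt (by omega)
    have h2 : 2 * r / q = 0 := Nat.div_eq_of_lt (by omega)
    rw [h15, h10, h4, h3, h2]
  · omega
  · omega
  · omega
  · have h15 : 15 * r / q = 10 := Nat.div_eq_of_lt_le (by omega) (by omega)
    have h10 : 10 * r / q = 6 := Nat.div_eq_of_lt_le (by omega) (by omega)
    have h4 : 4 * r / q = 2 := Nat.div_eq_of_lt_le (by omega) (by omega)
    have h3 : 3 * r / q = 2 := Nat.div_eq_of_lt_le (by omega) (by omega)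
    have h2 : 2 * r / q = 1 := Nat.div_eq_of_lt_le (by omega) (by omega)
    rw [h15, h10, h4, h3, h2]
  · omega
  · have h15 : 15 * r / q = 13 := Nat.div_eq_of_lt_le (by omega) (by omega)
    have h10 : 10 * r / q = 8 := Nat.div_eq_of_lt_le (by omega) (by omega)
    have h4 : 4 * r / q = 3 := Nat.div_eq_of_lt_le (by omega) (by omega)
    have h3 : 3 * r / q = 2 := Nat.div_eq_of_lt_le (by omega) (by omega)
    have h2 : 2 * r / q = 1 := Nat.div_eq_of_lt_le (by omega) (by omega)
    rw [h15, h10, h4, h3, h2]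

private lemma auxB {q r : ℕ} (hq2 : q % 2 = 1) (hq5 : q % 5 ≠ 0) (hq1 : 1 < q)
    (hb3 : q ≠ 3) (hb9 : q ≠ 9) (hb11 : q ≠ 11) (hb19 : q ≠ 19) (hb21 : q ≠ 21)
    (hb23 : q ≠ 23) (hr : r < q) (hdvd : q ∣ 10 * r + 9) :
    10 * r / q + 4 * r / q + 3 * r / q + 1 ≤ 15 * r / q + 2 * r / q := by
  obtain ⟨m, hm⟩ := hdvd
  have hq0 : 0 < q := by omega
  have hm10 : m < 10 := by
    by_contra h
    push_neg at h
    have : q * 10 ≤ q * m := Nat.mul_le_mul_left q h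
    omega
  interval_cases m
  · omega
  · -- q = 10r+9, q ≥ 29
    have h15 : 15 * r / q = 1 := Nat.div_eq_of_lt_le (by omega) (by omega)
    have h10 : 10 * r / q = 0 := Nat.div_eq_of_lt (by omega)
    have h4 : 4 * r / q = 0 := Nat.div_eq_of_lt (by omega)
    have h3 : 3 * r / q = 0 := Nat.div_eq_of_lt (by omega)
    have h2 : 2 * r / q = 0 := Nat.div_eq_of_lt (by omega)
    rw [h15, h10, h4, h3, h2]
  · omega
  · -- 3q = 10r+9 : q = 13 or q ≥ 33
    rcases Nat.lt_or_ge q 33 with h | h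
    · have hq : q = 13 := by omega
      have hrr : r = 3 := by omega
      subst hq hrr
      norm_num
    · have h15 : 15 * r / q = 4 := Nat.div_eq_of_lt_le (by omega) (by omega)
      have h10 : 10 * r / q = 2 := Nat.div_eq_of_lt_le (by omega) (by omega)
      have h4 : 4 * r / q = 1 := Nat.div_eq_of_lt_le (by omega) (by omega)
      have h3 : 3 * r / q = 0 := Nat.div_eq_of_lt (by omega)
      have h2 : 2 * r / q = 0 := Nat.div_eq_of_lt (by omega)
      rw [h15, h10, h4, h3, h2]
  · omega
  · omega
  · omega
  · -- 7q = 10r+9 : q ∈ {7,17} or q ≥ 27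
    rcases Nat.lt_or_ge q 27 with h | h
    · rcases Nat.lt_or_ge q 17 with h' | h'
      · have hq : q = 7 := by omega
        have hrr : r = 4 := by omega
        subst hq hrr
        norm_num
      · have hq : q = 17 := by omega
        have hrr : r = 11 := by omega
        subst hq hrr
        norm_num
    · have h15 : 15 * r / q = 10 := Nat.div_eq_of_lt_le (by omega) (by omega)
      have h10 : 10 * r / q = 6 := Nat.div_eq_of_lt_le (by omega) (by omega)
      have h4 : 4 * r / q = 2 := Nat.div_eq_of_lt_le (by omega) (by omega)
      have h3 : 3 * r / q = 2 := Nat.div_eq_of_lt_le (by omega) (by omega)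
      have h2 : 2 * r / q = 1 := Nat.div_eq_of_lt_le (by omega) (by omega)
      rw [h15, h10, h4, h3, h2]
  · omega
  · -- 9q = 10r+9, q ≡ 1 mod 10, q ≥ 31
    have h15 : 15 * r / q = 13 := Nat.div_eq_of_lt_le (by omega) (by omega)
    have h10 : 10 * r / q = 8 := Nat.div_eq_of_lt_le (by omega) (by omega)
    have h4 : 4 * r / q = 3 := Nat.div_eq_of_lt_le (by omega) (by omega)
    have h3 : 3 * r / q = 2 := Nat.div_eq_of_lt_le (by omega) (by omega)
    have h2 : 2 * r / q = 1 := Nat.div_eq_of_lt_le (by omega) (by omega)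
    rw [h15, h10, h4, h3, h2]

private lemma reduce_to_rem {q n : ℕ} (hq0 : 0 < q)
    (haux : 10 * (n % q) / q + 4 * (n % q) / q + 3 * (n % q) / q + 1
      ≤ 15 * (n % q) / q + 2 * (n % q) / q) :
    10 * n / q + 4 * n / q + 3 * n / q + 1 ≤ 15 * n / q + 2 * n / q := by
  have e : ∀ k : ℕ, k * n / q = k * (n / q) + k * (n % q) / q := by
    intro k
    conv_lhs => rw [← Nat.div_add_mod n q]
    rw [Nat.mul_add, ← Nat.mul_assoc, Nat.mul_comm k q, Nat.mul_assoc,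
      Nat.mul_add_div hq0]
  rw [e 10, e 4, e 3, e 15, e 2]
  have := e 1
  omega

private lemma keyA {q n : ℕ} (hq2 : q % 2 = 1) (hq5 : q % 5 ≠ 0) (hq1 : 1 < q)
    (hdvd : q ∣ 10 * n + 1) :
    10 * n / q + 4 * n / q + 3 * n / q + 1 ≤ 15 * n / q + 2 * n / q := by
  have hq0 : 0 < q := by omega
  apply reduce_to_rem hq0
  apply auxA hq2 hq5 hq1 (Nat.mod_lt _ hq0)
  have h1 : q ∣ q * (10 * (n / q)) := Dvd.intro _ rfl
  have h2 := Nat.dvd_sub hdvd h1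
  have h3 : 10 * n + 1 - q * (10 * (n / q)) = 10 * (n % q) + 1 := by
    have := Nat.div_add_mod n q
    have hx : q * (10 * (n / q)) = 10 * (q * (n / q)) := by ring
    have hy : q * (n / q) ≤ n := Nat.mul_div_le n q
    omega
  rwa [h3] at h2

private lemma keyB {q n : ℕ} (hq2 : q % 2 = 1) (hq5 : q % 5 ≠ 0) (hq1 : 1 < q)
    (hb3 : q ≠ 3) (hb9 : q ≠ 9) (hb11 : q ≠ 11) (hb19 : q ≠ 19) (hb21 : q ≠ 21)
    (hb23 : q ≠ 23) (hdvd : q ∣ 10 * n + 9) :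
    10 * n / q + 4 * n / q + 3 * n / q + 1 ≤ 15 * n / q + 2 * n / q := by
  have hq0 : 0 < q := by omega
  apply reduce_to_rem hq0
  apply auxB hq2 hq5 hq1 hb3 hb9 hb11 hb19 hb21 hb23 (Nat.mod_lt _ hq0)
  have h1 : q ∣ q * (10 * (n / q)) := Dvd.intro _ rfl
  have h2 := Nat.dvd_sub hdvd h1
  have h3 : 10 * n + 9 - q * (10 * (n / q)) = 10 * (n % q) + 9 := by
    have := Nat.div_add_mod n q
    have hx : q * (10 * (n / q)) = 10 * (q * (n / q)) := by ring
    have hy : q * (n / q) ≤ n := Nat.mul_div_le n q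
    omega
  rwa [h3] at h2

private lemma sum_special (p b n : ℕ) (hp : 0 < p) (P : ℕ → Prop) [DecidablePred P]
    (hgood : ∀ i ∈ Finset.Ico 1 b, P i →
      10 * n / p ^ i + 4 * n / p ^ i + 3 * n / p ^ i + 1 ≤ 15 * n / p ^ i + 2 * n / p ^ i) :
    (∑ i ∈ Finset.Ico 1 b, 10 * n / p ^ i) + (∑ i ∈ Finset.Ico 1 b, 4 * n / p ^ i)
      + (∑ i ∈ Finset.Ico 1 b, 3 * n / p ^ i) + ((Finset.Ico 1 b).filter P).card
    ≤ (∑ i ∈ Finset.Ico 1 b, 15 * n / p ^ i) + (∑ i ∈ Finset.Ico 1 b, 2 * n / p ^ i) := by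
  rw [Finset.card_filter, ← Finset.sum_add_distrib, ← Finset.sum_add_distrib,
    ← Finset.sum_add_distrib, ← Finset.sum_add_distrib]
  apply Finset.sum_le_sum
  intro i hi
  by_cases h : P i
  · simp only [h, if_true]
    exact hgood i hi h
  · simp only [h, if_false]
    have := div5 (Nat.pow_pos hp : 0 < p ^ i) n
    omega

private lemma dsumle (n : ℕ) : (Nat.digits 5 n).sum ≤ n := by
  induction n using Nat.strong_induction_on with
  | _ n ih =>
    rcases Nat.eq_zero_or_pos n with rfl | hn
    · simp
    · rw [Nat.digits_def' (by norm_num : (1:ℕ) < 5) hn]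
      simp only [List.sum_cons]
      have h1 : n / 5 < n := Nat.div_lt_self hn (by norm_num)
      have h2 := ih (n / 5) h1
      have h3 := Nat.div_add_mod n 5
      omega

private lemma dsumshift (m : ℕ) (hm : 0 < m) :
    (Nat.digits 5 (5 * m)).sum = (Nat.digits 5 m).sum := by
  rw [Nat.digits_def' (by norm_num : (1:ℕ) < 5) (by positivity)]
  simp [Nat.mul_div_cancel_left m (by norm_num : 0 < 5)]

private lemma p5_case (n : ℕ) (hn : 0 < n) :
    padicValNat 5 (10 * n)! + padicValNat 5 (4 * n)! + padicValNat 5 (3 * n)! + 1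
      ≤ padicValNat 5 (15 * n)! + padicValNat 5 (2 * n)! := by
  haveI : Fact (Nat.Prime 5) := ⟨by norm_num⟩
  have key : ∀ m : ℕ, 4 * padicValNat 5 (m !) = m - (Nat.digits 5 m).sum := by
    intro m
    have := sub_one_mul_padicValNat_factorial (p := 5) m
    norm_num at this
    exact this
  have k10 := key (10 * n); have k4 := key (4 * n); have k3 := key (3 * n)
  have k15 := key (15 * n); have k2 := key (2 * n)
  have l10 := dsumle (10 * n); have l4 := dsumle (4 * n)
  have l3 := dsumle (3 * n); have l15 := dsumle (15 * n)
  have l2 := dsumle (2 * n)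
  have s10 : (Nat.digits 5 (10 * n)).sum = (Nat.digits 5 (2 * n)).sum := by
    rw [show 10 * n = 5 * (2 * n) by ring, dsumshift _ (by omega)]
  have s15 : (Nat.digits 5 (15 * n)).sum = (Nat.digits 5 (3 * n)).sum := by
    rw [show 15 * n = 5 * (3 * n) by ring, dsumshift _ (by omega)]
  have smod : 4 * n % 4 = (Nat.digits 5 (4 * n)).sum % 4 :=
    Nat.modEq_digits_sum 4 5 (by norm_num) (4 * n)
  have spos : 0 < (Nat.digits 5 (4 * n)).sum := by
    have hne : Nat.digits 5 (4 * n) ≠ [] :=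
      Nat.digits_ne_nil_iff_ne_zero.mpr (by omega)
    have hlast := Nat.getLast_digit_ne_zero 5 (show 4 * n ≠ 0 by omega)
    have hmem := List.getLast_mem hne
    have := List.single_le_sum (fun x (_ : x ∈ Nat.digits 5 (4 * n)) => Nat.zero_le x) _ hmem
    omega
  omega

set_option maxHeartbeats 4000000 in
/-- The core per-prime inequality. -/
private lemma main_core (p n : ℕ) (hp : p.Prime) (hn : 0 < n) :
    padicValNat p 5 + padicValNat p (10 * n + 1) + padicValNat p (10 * n + 9)
      + padicValNat p (10 * n)! + padicValNat p (4 * n)! + padicValNat p (3 * n)!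
    ≤ padicValNat p 43263 + padicValNat p (15 * n)! + padicValNat p (2 * n)! := by
  haveI : Fact p.Prime := ⟨hp⟩
  set b := 15 * n + 10 with hb
  have hlog : ∀ m : ℕ, m ≤ 15 * n → Nat.log p m < b := fun m hm =>
    lt_of_le_of_lt (le_trans (Nat.log_le_self p m) hm) (by omega)
  rw [padicValNat_factorial (hlog (10 * n) (by omega)),
    padicValNat_factorial (hlog (4 * n) (by omega)),
    padicValNat_factorial (hlog (3 * n) (by omega)),
    padicValNat_factorial (hlog (15 * n) (by omega)),
    padicValNat_factorial (hlog (2 * n) (by omega))]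
  have hplain : (∑ i ∈ Finset.Ico 1 b, 10 * n / p ^ i) + (∑ i ∈ Finset.Ico 1 b, 4 * n / p ^ i)
      + (∑ i ∈ Finset.Ico 1 b, 3 * n / p ^ i)
      ≤ (∑ i ∈ Finset.Ico 1 b, 15 * n / p ^ i) + (∑ i ∈ Finset.Ico 1 b, 2 * n / p ^ i) := by
    have := sum_special p b n hp.pos (fun _ => False) (by intro i _ h; exact h.elim)
    simpa using this
  rcases eq_or_ne p 2 with rfl | hp2
  · have v5 : padicValNat 2 5 = 0 := padicValNat.eq_zero_of_not_dvd (by norm_num)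
    have v1 : padicValNat 2 (10 * n + 1) = 0 := padicValNat.eq_zero_of_not_dvd (by omega)
    have v9 : padicValNat 2 (10 * n + 9) = 0 := padicValNat.eq_zero_of_not_dvd (by omega)
    omega
  rcases eq_or_ne p 5 with rfl | hp5
  · have v1 : padicValNat 5 (10 * n + 1) = 0 := padicValNat.eq_zero_of_not_dvd (by omega)
    have v9 : padicValNat 5 (10 * n + 9) = 0 := padicValNat.eq_zero_of_not_dvd (by omega)
    have v55 : padicValNat 5 5 = 1 := padicValNat.self (by norm_num)
    have := p5_case n hn
    rw [padicValNat_factorial (hlog (10 * n) (by omega)),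
      padicValNat_factorial (hlog (4 * n) (by omega)),
      padicValNat_factorial (hlog (3 * n) (by omega)),
      padicValNat_factorial (hlog (15 * n) (by omega)),
      padicValNat_factorial (hlog (2 * n) (by omega))] at this
    omega
  -- now p odd, p ≠ 5
  have hpodd : p % 2 = 1 := Nat.odd_iff.mp (hp.odd_of_ne_two hp2)
  have v5 : padicValNat p 5 = 0 := by
    apply padicValNat.eq_zero_of_not_dvd
    intro h
    exact hp5 ((Nat.prime_dvd_prime_iff_eq hp (by norm_num)).mp h)
  have hqodd : ∀ i : ℕ, p ^ i % 2 = 1 := fun i =>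
    Nat.odd_iff.mp ((hp.odd_of_ne_two hp2).pow)
  have hq5 : ∀ i : ℕ, p ^ i % 5 ≠ 0 := by
    intro i h
    have h5 : (5 : ℕ) ∣ p ^ i := Nat.dvd_of_mod_eq_zero h
    have := (Nat.Prime.dvd_of_dvd_pow (by norm_num : Nat.Prime 5)) h5
    exact hp5 ((Nat.prime_dvd_prime_iff_eq (by norm_num) hp).mp this).symm
  have hq1 : ∀ i : ℕ, 1 ≤ i → 1 < p ^ i := fun i hi =>
    Nat.one_lt_pow (by omega) hp.one_lt
  by_cases h1 : p ∣ 10 * n + 1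
  · -- the 10n+1 branch
    have h9 : ¬ p ∣ 10 * n + 9 := by
      intro h9
      have := Nat.dvd_sub h9 h1
      rw [show 10 * n + 9 - (10 * n + 1) = 8 by omega, show (8:ℕ) = 2 ^ 3 by norm_num] at this
      exact hp2 ((Nat.prime_dvd_prime_iff_eq hp (by norm_num)).mp (hp.dvd_of_dvd_pow this))
    have v9 : padicValNat p (10 * n + 9) = 0 := padicValNat.eq_zero_of_not_dvd h9
    set a1 := padicValNat p (10 * n + 1) with ha1
    have hsp := sum_special p b n hp.pos (fun i => p ^ i ∣ 10 * n + 1)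
      (by
        intro i hi hPi
        simp only [Finset.mem_Ico] at hi
        exact keyA (hqodd i) (hq5 i) (hq1 i hi.1) hPi)
    have hcard : a1 ≤ ((Finset.Ico 1 b).filter (fun i => p ^ i ∣ 10 * n + 1)).card := by
      have hsub : Finset.Ico 1 (a1 + 1) ⊆
          (Finset.Ico 1 b).filter (fun i => p ^ i ∣ 10 * n + 1) := by
        intro i hi
        simp only [Finset.mem_Ico] at hi
        have hdvd : p ^ i ∣ 10 * n + 1 :=
          dvd_trans (pow_dvd_pow p (by omega)) pow_padicValNat_dvd
        have hle : p ^ i ≤ 10 * n + 1 := Nat.le_of_dvd (by omega) hdvd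
        have hlt : i < p ^ i := Nat.lt_pow_self hp.one_lt
        simp only [Finset.mem_filter, Finset.mem_Ico]
        exact ⟨⟨hi.1, by omega⟩, hdvd⟩
      have := Finset.card_le_card hsub
      rwa [Nat.card_Ico, Nat.add_sub_cancel] at this
    omega
  · have v1 : padicValNat p (10 * n + 1) = 0 := padicValNat.eq_zero_of_not_dvd h1
    by_cases h9 : p ∣ 10 * n + 9
    swap
    · have v9 : padicValNat p (10 * n + 9) = 0 := padicValNat.eq_zero_of_not_dvd h9
      omega
    set a9 := padicValNat p (10 * n + 9) with ha9
    -- how many initial levels are excused, and the compensation in 43263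
    have hv43 : ∀ k : ℕ, p ^ k ∣ 43263 → k ≤ padicValNat p 43263 := by
      intro k hk
      have := (Nat.Prime.pow_dvd_iff_le_factorization hp (by norm_num : (43263:ℕ) ≠ 0)).mp hk
      rwa [Nat.factorization_def _ hp] at this
    have main : ∀ i₀ : ℕ, 1 ≤ i₀ →
        (∀ i, i₀ ≤ i → 1 ≤ i → p ^ i ∣ 10 * n + 9 →
          10 * n / p ^ i + 4 * n / p ^ i + 3 * n / p ^ i + 1
            ≤ 15 * n / p ^ i + 2 * n / p ^ i) →
        (i₀ - 1 ≤ padicValNat p 43263) →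
        padicValNat p 5 + padicValNat p (10 * n + 1) + a9
          + (∑ i ∈ Finset.Ico 1 b, 10 * n / p ^ i) + (∑ i ∈ Finset.Ico 1 b, 4 * n / p ^ i)
          + (∑ i ∈ Finset.Ico 1 b, 3 * n / p ^ i)
        ≤ padicValNat p 43263 + (∑ i ∈ Finset.Ico 1 b, 15 * n / p ^ i)
          + (∑ i ∈ Finset.Ico 1 b, 2 * n / p ^ i) := by
      intro i₀ hi₀ hgood hcomp
      have hsp := sum_special p b n hp.pos (fun i => p ^ i ∣ 10 * n + 9 ∧ i₀ ≤ i)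
        (by
          intro i hi hPi
          simp only [Finset.mem_Ico] at hi
          exact hgood i hPi.2 hi.1 hPi.1)
      have hcard : a9 - (i₀ - 1) ≤
          ((Finset.Ico 1 b).filter (fun i => p ^ i ∣ 10 * n + 9 ∧ i₀ ≤ i)).card := by
        have hsub : Finset.Ico i₀ (a9 + 1) ⊆
            (Finset.Ico 1 b).filter (fun i => p ^ i ∣ 10 * n + 9 ∧ i₀ ≤ i) := by
          intro i hi
          simp only [Finset.mem_Ico] at hi
          have hdvd : p ^ i ∣ 10 * n + 9 :=
            dvd_trans (pow_dvd_pow p (by omega)) pow_padicValNat_dvd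
          have hle : p ^ i ≤ 10 * n + 9 := Nat.le_of_dvd (by omega) hdvd
          have hlt : i < p ^ i := Nat.lt_pow_self hp.one_lt
          simp only [Finset.mem_filter, Finset.mem_Ico]
          exact ⟨⟨by omega, by omega⟩, hdvd, hi.1⟩
        have := Finset.card_le_card hsub
        rw [Nat.card_Ico] at this
        omega
      omega
    -- case split on p
    rcases eq_or_ne p 3 with rfl | hp3
    · apply main 3 (by omega)
      · intro i hi hi1 hdvd
        have h27 : 27 ≤ 3 ^ i := by
          calc (27:ℕ) = 3 ^ 3 := by norm_num
            _ ≤ 3 ^ i := Nat.pow_le_pow_right (by norm_num) hi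
        exact keyB (hqodd i) (hq5 i) (hq1 i hi1) (by omega) (by omega) (by omega)
          (by omega) (by omega) (by omega) hdvd
      · exact hv43 2 (by norm_num)
    rcases eq_or_ne p 11 with rfl | hp11
    · apply main 2 (by omega)
      · intro i hi hi1 hdvd
        have h121 : 121 ≤ 11 ^ i := by
          calc (121:ℕ) = 11 ^ 2 := by norm_num
            _ ≤ 11 ^ i := Nat.pow_le_pow_right (by norm_num) hi
        exact keyB (hqodd i) (hq5 i) (hq1 i hi1) (by omega) (by omega) (by omega)
          (by omega) (by omega) (by omega) hdvd
      · exact hv43 1 (by norm_num)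
    rcases eq_or_ne p 19 with rfl | hp19
    · apply main 2 (by omega)
      · intro i hi hi1 hdvd
        have h361 : 361 ≤ 19 ^ i := by
          calc (361:ℕ) = 19 ^ 2 := by norm_num
            _ ≤ 19 ^ i := Nat.pow_le_pow_right (by norm_num) hi
        exact keyB (hqodd i) (hq5 i) (hq1 i hi1) (by omega) (by omega) (by omega)
          (by omega) (by omega) (by omega) hdvd
      · exact hv43 1 (by norm_num)
    rcases eq_or_ne p 23 with rfl | hp23
    · apply main 2 (by omega)
      · intro i hi hi1 hdvd
        have h529 : 529 ≤ 23 ^ i := by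
          calc (529:ℕ) = 23 ^ 2 := by norm_num
            _ ≤ 23 ^ i := Nat.pow_le_pow_right (by norm_num) hi
        exact keyB (hqodd i) (hq5 i) (hq1 i hi1) (by omega) (by omega) (by omega)
          (by omega) (by omega) (by omega) hdvd
      · exact hv43 1 (by norm_num)
    · -- generic p
      apply main 1 (by omega)
      · intro i hi hi1 hdvd
        have hpdvd : p ∣ p ^ i := dvd_pow_self p (by omega)
        have hne : ∀ w : ℕ, w = 3 ∨ w = 9 ∨ w = 11 ∨ w = 19 ∨ w = 23 → p ^ i ≠ w := by
          intro w hw hEq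
          have hpw : p ∣ w := hEq ▸ hpdvd
          rcases hw with rfl | rfl | rfl | rfl | rfl
          · exact hp3 ((Nat.prime_dvd_prime_iff_eq hp (by norm_num)).mp hpw)
          · have : p ∣ 3 * 3 := by norm_num at hpw ⊢; exact hpw
            rcases (Nat.Prime.dvd_mul hp).mp this with h | h <;>
              exact hp3 ((Nat.prime_dvd_prime_iff_eq hp (by norm_num)).mp h)
          · exact hp11 ((Nat.prime_dvd_prime_iff_eq hp (by norm_num)).mp hpw)
          · exact hp19 ((Nat.prime_dvd_prime_iff_eq hp (by norm_num)).mp hpw)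
          · exact hp23 ((Nat.prime_dvd_prime_iff_eq hp (by norm_num)).mp hpw)
        have hne21 : p ^ i ≠ 21 := by
          intro hEq
          have hpw : p ∣ 21 := hEq ▸ hpdvd
          have : p ∣ 3 * 7 := by norm_num at hpw ⊢; exact hpw
          rcases (Nat.Prime.dvd_mul hp).mp this with h | h
          · exact hp3 ((Nat.prime_dvd_prime_iff_eq hp (by norm_num)).mp h)
          · have hp7 : p = 7 := (Nat.prime_dvd_prime_iff_eq hp (by norm_num)).mp h
            subst hp7
            have h3 : (3:ℕ) ∣ 7 ^ i := hEq ▸ (by norm_num : (3:ℕ) ∣ 21)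
            have := (Nat.Prime.dvd_of_dvd_pow (by norm_num : Nat.Prime 3)) h3
            norm_num at this
        exact keyB (hqodd i) (hq5 i) (hq1 i hi1) (hne 3 (Or.inl rfl))
          (hne 9 (Or.inr (Or.inl rfl))) (hne 11 (Or.inr (Or.inr (Or.inl rfl))))
          (hne 19 (Or.inr (Or.inr (Or.inr (Or.inl rfl))))) hne21
          (hne 23 (Or.inr (Or.inr (Or.inr (Or.inr rfl))))) hdvd
      · omega

set_option maxHeartbeats 4000000 in
/-- The clean factorial-product form. -/
private lemma star (n : ℕ) (hn : 0 < n) :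
    5 * ((10 * n + 1) * ((10 * n + 9) * ((10 * n)! * ((4 * n)! * (3 * n)!))))
      ∣ 43263 * ((15 * n)! * (2 * n)!) := by
  have f10 : (10 * n)! ≠ 0 := Nat.factorial_ne_zero _
  have f4 : (4 * n)! ≠ 0 := Nat.factorial_ne_zero _
  have f3 : (3 * n)! ≠ 0 := Nat.factorial_ne_zero _
  have f15 : (15 * n)! ≠ 0 := Nat.factorial_ne_zero _
  have f2 : (2 * n)! ≠ 0 := Nat.factorial_ne_zero _
  have hA : 5 * ((10 * n + 1) * ((10 * n + 9) * ((10 * n)! * ((4 * n)! * (3 * n)!)))) ≠ 0 := by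
    refine Nat.mul_ne_zero (by norm_num) (Nat.mul_ne_zero (by omega) (Nat.mul_ne_zero (by omega)
      (Nat.mul_ne_zero f10 (Nat.mul_ne_zero f4 f3))))
  have hB : 43263 * ((15 * n)! * (2 * n)!) ≠ 0 :=
    Nat.mul_ne_zero (by norm_num) (Nat.mul_ne_zero f15 f2)
  rw [← Nat.factorization_le_iff_dvd hA hB]
  intro p
  by_cases hp : p.Prime
  swap
  · simp [Nat.factorization_eq_zero_of_not_prime _ hp]
  have hfact : ∀ m : ℕ, m ≠ 0 → ∀ k : ℕ, k ≠ 0 →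
      (m * k).factorization p = m.factorization p + k.factorization p := by
    intro m hm k hk
    rw [Nat.factorization_mul hm hk]
    rfl
  rw [hfact _ (by norm_num) _ (Nat.mul_ne_zero (by omega) (Nat.mul_ne_zero (by omega)
        (Nat.mul_ne_zero f10 (Nat.mul_ne_zero f4 f3)))),
    hfact _ (by omega) _ (Nat.mul_ne_zero (by omega) (Nat.mul_ne_zero f10 (Nat.mul_ne_zero f4 f3))),
    hfact _ (by omega) _ (Nat.mul_ne_zero f10 (Nat.mul_ne_zero f4 f3)),
    hfact _ f10 _ (Nat.mul_ne_zero f4 f3),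
    hfact _ f4 _ f3,
    hfact _ (by norm_num) _ (Nat.mul_ne_zero f15 f2),
    hfact _ f15 _ f2]
  simp only [Nat.factorization_def _ hp]
  have := main_core p n hp hn
  omega

theorem t_n_mod_10n_add_9 (n : ℕ) (hn : 0 < n) :
    (10 * n + 1) * (10 * n + 9) * Nat.choose (3 * n) n ∣
      43263 * (Nat.choose (15 * n) (5 * n) * Nat.choose (5 * n - 1) (n - 1)) := by
  have h1 : Nat.choose (15 * n) (5 * n) * (5 * n)! * (10 * n)! = (15 * n)! := by
    have := Nat.choose_mul_factorial_mul_factorial (show 5 * n ≤ 15 * n by omega)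
    rwa [show 15 * n - 5 * n = 10 * n by omega] at this
  have h2 : Nat.choose (5 * n - 1) (n - 1) * (n - 1)! * (4 * n)! = (5 * n - 1)! := by
    have := Nat.choose_mul_factorial_mul_factorial (show n - 1 ≤ 5 * n - 1 by omega)
    rwa [show 5 * n - 1 - (n - 1) = 4 * n by omega] at this
  have h3 : Nat.choose (3 * n) n * n ! * (2 * n)! = (3 * n)! := by
    have := Nat.choose_mul_factorial_mul_factorial (show n ≤ 3 * n by omega)
    rwa [show 3 * n - n = 2 * n by omega] at this
  have h4 : 5 * n * (5 * n - 1)! = (5 * n)! := Nat.mul_factorial_pred (by omega)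
  have h5 : n * (n - 1)! = n ! := Nat.mul_factorial_pred hn.ne'
  have hK : 0 < 5 * ((5 * n)! * ((10 * n)! * ((n - 1)! * ((4 * n)! * (n ! * (2 * n)!))))) := by
    positivity
  rw [← Nat.mul_dvd_mul_iff_right hK]
  have hL : (10 * n + 1) * (10 * n + 9) * Nat.choose (3 * n) n
        * (5 * ((5 * n)! * ((10 * n)! * ((n - 1)! * ((4 * n)! * (n ! * (2 * n)!))))))
      = (5 * ((10 * n + 1) * ((10 * n + 9) * ((10 * n)! * ((4 * n)! * (3 * n)!)))))
        * ((5 * n)! * (n - 1)!) := by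
    calc (10 * n + 1) * (10 * n + 9) * Nat.choose (3 * n) n
          * (5 * ((5 * n)! * ((10 * n)! * ((n - 1)! * ((4 * n)! * (n ! * (2 * n)!))))))
        = (10 * n + 1) * (10 * n + 9) * (Nat.choose (3 * n) n * n ! * (2 * n)!)
          * (5 * ((5 * n)! * ((10 * n)! * ((n - 1)! * (4 * n)!)))) := by ring
      _ = (10 * n + 1) * (10 * n + 9) * (3 * n)!
          * (5 * ((5 * n)! * ((10 * n)! * ((n - 1)! * (4 * n)!)))) := by rw [h3]
      _ = (5 * ((10 * n + 1) * ((10 * n + 9) * ((10 * n)! * ((4 * n)! * (3 * n)!)))))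
          * ((5 * n)! * (n - 1)!) := by ring
  have hR : 43263 * (Nat.choose (15 * n) (5 * n) * Nat.choose (5 * n - 1) (n - 1))
        * (5 * ((5 * n)! * ((10 * n)! * ((n - 1)! * ((4 * n)! * (n ! * (2 * n)!))))))
      = (43263 * ((15 * n)! * (2 * n)!)) * ((5 * n)! * (n - 1)!) := by
    calc 43263 * (Nat.choose (15 * n) (5 * n) * Nat.choose (5 * n - 1) (n - 1))
          * (5 * ((5 * n)! * ((10 * n)! * ((n - 1)! * ((4 * n)! * (n ! * (2 * n)!))))))
        = 43263 * (Nat.choose (15 * n) (5 * n) * (5 * n)! * (10 * n)!)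
          * (Nat.choose (5 * n - 1) (n - 1) * (n - 1)! * (4 * n)!)
          * (5 * (n ! * (2 * n)!)) := by ring
      _ = 43263 * (15 * n)! * (5 * n - 1)! * (5 * (n ! * (2 * n)!)) := by rw [h1, h2]
      _ = 43263 * (15 * n)! * (5 * n - 1)! * (5 * ((n * (n - 1)!) * (2 * n)!)) := by rw [h5]
      _ = (43263 * ((15 * n)! * (2 * n)!)) * ((5 * n * (5 * n - 1)!) * (n - 1)!) := by ring
      _ = (43263 * ((15 * n)! * (2 * n)!)) * ((5 * n)! * (n - 1)!) := by rw [h4]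
  rw [hL, hR]
  exact Nat.mul_dvd_mul_right (star n hn) ((5 * n)! * (n - 1)!)
end
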